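/- Fix integers m ≥ 1, q ≥ 0, ρ with 0 ≤ ρ < m, and N ≥ 0. Then the coefficient of x^N in the power series p_{m−ρ−1}(x)·p_m(x)^{−(q+1)} ∈ ℚ[[x]] equals the number of (q+1)-tuples (P_0, P_1, …, P_q) of Dyck paths for which there exist nonnegative integers u_0, u_1, …, u_q with u_0+u_1+⋯+u_q = N, P_0 is counted by D_m(0, m−ρ−1; u_0) (a Dyck path of height at most m−1 and semilength ρ+u_0 whose last ρ steps are down-steps), and for 1 ≤ ν ≤ q, P_ν is counted by D_m(0, 0; u_ν) (a Dyck path of height at most m−1 and semilength m−1+u_ν whose last m−1 steps are down-steps). -/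

import Mathlib

/-- The Chebyshev-type polynomial sequence: `p 0 = p 1 = 1`,
`p (r+2) = p (r+1) - X * p r`. -/
noncomputable def chebP : ℕ → Polynomial ℚ
  | 0 => 1
  | 1 => 1
  | (r+2) => chebP (r+1) - Polynomial.X * chebP r

/-- The height of a lattice path after its first `i` steps, where the path is
encoded as `st : Fin n → Bool` (`true` = up-step `U = (1,1)`,
`false` = down-step `D = (1,-1)`), starting at `(0,0)`. -/
def heightAt {n : ℕ} (st : Fin n → Bool) (i : ℕ) : ℤ :=
  ∑ j ∈ Finset.univ.filter (fun j : Fin n => (j : ℕ) < i),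
    (if st j then (1 : ℤ) else -1)

/-- `dyckCount m a b u` is the number of Dyck paths (lattice paths from `(0,0)`
ending on the x-axis with steps `U = (1,1)`, `D = (1,-1)` that never go below
the x-axis) of height at most `m-1` and semilength `m-1-b+u` whose first `a`
steps are up-steps and whose last `m-1-b` steps are down-steps. -/
noncomputable def dyckCount (m a b u : ℕ) : ℕ :=
  Nat.card {st : Fin (2 * (m - 1 - b + u)) → Bool //
    heightAt st (2 * (m - 1 - b + u)) = 0 ∧
    (∀ i ≤ 2 * (m - 1 - b + u), 0 ≤ heightAt st i ∧ heightAt st i ≤ (m : ℤ) - 1) ∧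
    (∀ j : Fin (2 * (m - 1 - b + u)), (j : ℕ) < a → st j = true) ∧
    (∀ j : Fin (2 * (m - 1 - b + u)),
        2 * (m - 1 - b + u) - (m - 1 - b) ≤ (j : ℕ) → st j = false)}

/-! ### Basic lemmas about `heightAt` -/

lemma heightAt_zero {n : ℕ} (st : Fin n → Bool) : heightAt st 0 = 0 := by
  simp [heightAt]

lemma heightAt_succ {n : ℕ} (st : Fin n → Bool) (i : ℕ) (h : i < n) :
    heightAt st (i + 1) = heightAt st i + (if st ⟨i, h⟩ then 1 else -1) := by
  unfold heightAt
  have : Finset.univ.filter (fun j : Fin n => (j : ℕ) < i + 1)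
      = insert ⟨i, h⟩ (Finset.univ.filter (fun j : Fin n => (j : ℕ) < i)) := by
    ext j
    simp only [Finset.mem_filter, Finset.mem_univ, true_and, Finset.mem_insert, Fin.ext_iff]
    omega
  rw [this, Finset.sum_insert (by simp)]
  ring

lemma heightAt_succ_of_ge {n : ℕ} (st : Fin n → Bool) (i : ℕ) (h : n ≤ i) :
    heightAt st (i + 1) = heightAt st i := by
  unfold heightAt
  congr 1
  ext j
  simp only [Finset.mem_filter, Finset.mem_univ, true_and]
  have := j.isLt
  omega

lemma heightAt_eq_of_agree {n n' : ℕ} (st : Fin n → Bool) (st' : Fin n' → Bool) :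
    ∀ (i : ℕ) (hi : i ≤ n) (hi' : i ≤ n')
      (_ : ∀ j (h : j < i), st ⟨j, lt_of_lt_of_le h hi⟩ = st' ⟨j, lt_of_lt_of_le h hi'⟩),
      heightAt st i = heightAt st' i
  | 0, _, _, _ => by rw [heightAt_zero, heightAt_zero]
  | (i+1), hi, hi', hag => by
    rw [heightAt_succ st i (by omega), heightAt_succ st' i (by omega),
      heightAt_eq_of_agree st st' i (by omega) (by omega)
        (fun j h => hag j (by omega)), hag i (by omega)]

lemma heightAt_le {n : ℕ} (st : Fin n → Bool) : ∀ i : ℕ, heightAt st i ≤ (i : ℤ)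
  | 0 => by rw [heightAt_zero]; simp
  | (i+1) => by
    by_cases h : i < n
    · rw [heightAt_succ st i h]
      have := heightAt_le st i
      split <;> push_cast <;> omega
    · rw [heightAt_succ_of_ge st i (by omega)]
      have := heightAt_le st i
      push_cast
      omega

/-! ### Walks confined to `[0, m-1]` -/

/-- Walks of length `n` from `0` to `j`, staying within `[0, m-1]`. -/
noncomputable def numWalks (m n : ℕ) (j : ℤ) : ℕ :=
  Nat.card {st : Fin n → Bool // heightAt st n = j ∧
    ∀ k ≤ n, 0 ≤ heightAt st k ∧ heightAt st k ≤ (m : ℤ) - 1}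

lemma numWalks_zero (m : ℕ) (hm : 1 ≤ m) : numWalks m 0 0 = 1 := by
  rw [numWalks, Nat.card_eq_one_iff_unique]
  constructor
  · constructor
    intro a b
    apply Subtype.ext
    funext j
    exact j.elim0
  · refine ⟨⟨fun j => j.elim0, heightAt_zero _, fun k hk => ?_⟩⟩
    interval_cases k
    rw [heightAt_zero]
    constructor
    · rfl
    · have : (1 : ℤ) ≤ (m : ℤ) := by exact_mod_cast hm
      omega

lemma numWalks_eq_zero_of_lt (m n : ℕ) (j : ℤ) (h : (n : ℤ) < j) : numWalks m n j = 0 := by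
  rw [numWalks, Nat.card_eq_zero]
  left
  refine ⟨fun st => ?_⟩
  have := heightAt_le st.1 n
  have := st.2.1
  omega

lemma numWalks_eq_zero_of_top (m n : ℕ) (j : ℤ) (h : (m : ℤ) - 1 < j) : numWalks m n j = 0 := by
  rw [numWalks, Nat.card_eq_zero]
  left
  refine ⟨fun st => ?_⟩
  have := (st.2.2 n le_rfl).2
  have := st.2.1
  omega

lemma numWalks_eq_zero_of_neg (m n : ℕ) (j : ℤ) (h : j < 0) : numWalks m n j = 0 := by
  rw [numWalks, Nat.card_eq_zero]
  left
  refine ⟨fun st => ?_⟩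
  have := (st.2.2 n le_rfl).1
  have := st.2.1
  omega

lemma heightAt_init {n : ℕ} (st : Fin (n+1) → Bool) (i : ℕ) (hi : i ≤ n) :
    heightAt (Fin.init st) i = heightAt st i := by
  exact heightAt_eq_of_agree (Fin.init st) st i hi (by omega) (fun j h => rfl)

lemma heightAt_snoc {n : ℕ} (w : Fin n → Bool) (b : Bool) (i : ℕ) (hi : i ≤ n) :
    heightAt (Fin.snoc w b : Fin (n+1) → Bool) i = heightAt w i := by
  refine heightAt_eq_of_agree (Fin.snoc w b : Fin (n+1) → Bool) w i (by omega) hi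
    (fun j h => ?_)
  have : (⟨j, by omega⟩ : Fin (n+1)) = Fin.castSucc ⟨j, by omega⟩ := rfl
  rw [this, Fin.snoc_castSucc]

/-- Removing the last step of a confined walk. -/
lemma numWalks_succ (m n : ℕ) (j : ℤ) (h0 : 0 ≤ j) (h1 : j ≤ (m : ℤ) - 1) :
    numWalks m (n+1) j = numWalks m n (j-1) + numWalks m n (j+1) := by
  rw [numWalks, numWalks, numWalks, ← Nat.card_sum]
  apply Nat.card_congr
  have hlast : ∀ st : Fin (n+1) → Bool,
      heightAt st (n+1) = heightAt st n + (if st (Fin.last n) then 1 else -1) :=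
    fun st => heightAt_succ st n (by omega)
  refine
    { toFun := fun st =>
        if hb : st.1 (Fin.last n) then
          Sum.inl ⟨Fin.init st.1, ?_, ?_⟩
        else
          Sum.inr ⟨Fin.init st.1, ?_, ?_⟩
      invFun := fun s =>
        match s with
        | Sum.inl w => ⟨Fin.snoc w.1 true, ?_, ?_⟩
        | Sum.inr w => ⟨Fin.snoc w.1 false, ?_, ?_⟩
      left_inv := ?_
      right_inv := ?_ }
  · rw [heightAt_init _ _ le_rfl]
    have := hlast st.1
    rw [hb] at this
    simp only [if_true] at this
    have h2 := st.2.1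
    omega
  · intro k hk
    rw [heightAt_init _ _ hk]
    exact st.2.2 k (by omega)
  · rw [heightAt_init _ _ le_rfl]
    have := hlast st.1
    rw [Bool.not_eq_true] at hb
    rw [hb] at this
    simp only [Bool.false_eq_true, if_false] at this
    have h2 := st.2.1
    omega
  · intro k hk
    rw [heightAt_init _ _ hk]
    exact st.2.2 k (by omega)
  · rw [hlast, Fin.snoc_last, if_pos rfl, heightAt_snoc _ _ _ le_rfl, w.2.1]
    ring
  · intro k hk
    rcases Nat.lt_or_ge k (n+1) with hk' | hk'
    · rw [heightAt_snoc _ _ _ (by omega)]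
      exact w.2.2 k (by omega)
    · have : k = n + 1 := by omega
      subst this
      rw [hlast, Fin.snoc_last, if_pos rfl, heightAt_snoc _ _ _ le_rfl, w.2.1]
      constructor <;> omega
  · rw [hlast, Fin.snoc_last]
    simp only [Bool.false_eq_true, if_false]
    rw [heightAt_snoc _ _ _ le_rfl, w.2.1]
    ring
  · intro k hk
    rcases Nat.lt_or_ge k (n+1) with hk' | hk'
    · rw [heightAt_snoc _ _ _ (by omega)]
      exact w.2.2 k (by omega)
    · have : k = n + 1 := by omega
      subst this
      rw [hlast, Fin.snoc_last]
      simp only [Bool.false_eq_true, if_false]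
      rw [heightAt_snoc _ _ _ le_rfl, w.2.1]
      constructor <;> omega
  · intro st
    by_cases hb : st.1 (Fin.last n)
    · dsimp only
      rw [dif_pos hb]
      apply Subtype.ext
      simp only
      rw [← hb, Fin.snoc_init_self]
    · dsimp only
      rw [dif_neg hb]
      apply Subtype.ext
      simp only
      conv_rhs => rw [← Fin.snoc_init_self st.1]
      congr 1
      simp [Bool.not_eq_true] at hb
      rw [hb]
  · intro s
    match s with
    | Sum.inl w => simp [Fin.snoc_last, Fin.init_snoc]
    | Sum.inr w => simp [Fin.snoc_last, Fin.init_snoc]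

/-- A Dyck path of height `≤ m-1` whose last `m-1-b` steps are down-steps is
determined by (and determines) its initial walk of length `m-1-b + 2u`
from `0` to `m-1-b` confined to `[0, m-1]`. -/
lemma dyckCount_eq_numWalks (m b u : ℕ) (hm : 1 ≤ m) :
    dyckCount m 0 b u = numWalks m (m - 1 - b + 2 * u) ((m - 1 - b : ℕ) : ℤ) := by
  set c := m - 1 - b with hc
  set L := c + 2 * u with hL
  have hT : 2 * (m - 1 - b + u) = L + c := by omega
  have hcm : (c : ℤ) ≤ (m : ℤ) - 1 := by
    have h : c + 1 ≤ m := by omega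
    omega
  rw [dyckCount, numWalks]
  apply Nat.card_congr
  -- tail-height lemma for allowed dyck paths
  have tail : ∀ (st : Fin (2 * (m - 1 - b + u)) → Bool),
      (∀ j : Fin (2 * (m - 1 - b + u)), 2 * (m - 1 - b + u) - (m - 1 - b) ≤ (j : ℕ) → st j = false) →
      ∀ l ≤ c, heightAt st (L + l) = heightAt st L - l := by
    intro st hlast l hl
    induction l with
    | zero => simp
    | succ l ih =>
      have hlt : L + l < 2 * (m - 1 - b + u) := by omega
      rw [show L + (l+1) = (L + l) + 1 by omega, heightAt_succ st (L+l) hlt,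
        hlast ⟨L + l, hlt⟩ (by simp; omega), ih (by omega)]
      simp only [Bool.false_eq_true, if_false]
      push_cast
      ring
  refine
    { toFun := fun st => ⟨fun j : Fin L => st.1 ⟨j, by omega⟩, ?_, ?_⟩
      invFun := fun w => ⟨fun j : Fin (2 * (m - 1 - b + u)) =>
          if h : (j : ℕ) < L then w.1 ⟨j, h⟩ else false, ?_, ?_, ?_, ?_⟩
      left_inv := ?_
      right_inv := ?_ }
  · -- end height of restricted walk is c
    have hag : heightAt (fun j : Fin L => st.1 ⟨j, by omega⟩) L = heightAt st.1 L :=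
      heightAt_eq_of_agree _ st.1 L le_rfl (by omega) (fun j h => rfl)
    have := tail st.1 st.2.2.2.2 c le_rfl
    rw [show L + c = 2 * (m - 1 - b + u) by omega, st.2.1] at this
    omega
  · intro k hk
    have hag : heightAt (fun j : Fin L => st.1 ⟨j, by omega⟩) k = heightAt st.1 k :=
      heightAt_eq_of_agree _ st.1 k hk (by omega) (fun j h => rfl)
    rw [hag]
    exact st.2.2.1 k (by omega)
  · -- end height of extension is 0
    have hag : ∀ k ≤ L, heightAt (fun j : Fin (2 * (m - 1 - b + u)) =>
        if h : (j : ℕ) < L then w.1 ⟨j, h⟩ else false) k = heightAt w.1 k := by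
      intro k hk
      exact heightAt_eq_of_agree _ w.1 k (by omega) hk
        (fun j hj => by rw [dif_pos (by omega : j < L)])
    have htail := tail (fun j : Fin (2 * (m - 1 - b + u)) => if h : (j : ℕ) < L then w.1 ⟨j, h⟩ else false)
      (fun j hj => by rw [dif_neg (by omega : ¬ (j : ℕ) < L)]) c le_rfl
    rw [show L + c = 2 * (m - 1 - b + u) by omega] at htail
    rw [htail, hag L le_rfl, w.2.1]
    ring
  · intro k hk
    rcases Nat.lt_or_ge k (L + 1) with hk' | hk'
    · have hag : heightAt (fun j : Fin (2 * (m - 1 - b + u)) =>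
          if h : (j : ℕ) < L then w.1 ⟨j, h⟩ else false) k = heightAt w.1 k :=
        heightAt_eq_of_agree _ w.1 k (by omega) (by omega)
          (fun j hj => by rw [dif_pos (by omega : j < L)])
      rw [hag]
      exact w.2.2 k (by omega)
    · have htail := tail (fun j : Fin (2 * (m - 1 - b + u)) => if h : (j : ℕ) < L then w.1 ⟨j, h⟩ else false)
        (fun j hj => by rw [dif_neg (by omega : ¬ (j : ℕ) < L)]) (k - L) (by omega)
      rw [show L + (k - L) = k by omega] at htail
      have hag : heightAt (fun j : Fin (2 * (m - 1 - b + u)) =>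
          if h : (j : ℕ) < L then w.1 ⟨j, h⟩ else false) L = heightAt w.1 L :=
        heightAt_eq_of_agree _ w.1 L (by omega) le_rfl
          (fun j hj => by rw [dif_pos (by omega : j < L)])
      rw [htail, hag, w.2.1]
      have h2 : (k - L : ℕ) ≤ c := by omega
      constructor
      · omega
      · omega
  · intro j hj
    omega
  · intro j hj
    dsimp only
    rw [dif_neg (by omega : ¬ (j : ℕ) < L)]
  · intro st
    apply Subtype.ext
    funext j
    dsimp only
    by_cases h : (j : ℕ) < L
    · rw [dif_pos h]
    · rw [dif_neg h]
      exact (st.2.2.2.2 j (by omega)).symm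
  · intro w
    apply Subtype.ext
    funext j
    dsimp only
    rw [dif_pos j.isLt]

/-! ### Generating functions -/

open PowerSeries

/-- Generating function of walks from `0` to `i` confined to `[0, m-1]`,
with `x` marking the semilength excess. -/
noncomputable def Gser (m i : ℕ) : PowerSeries ℚ :=
  PowerSeries.mk fun u => (numWalks m (i + 2 * u) (i : ℤ) : ℚ)

lemma Gser_top (m i : ℕ) (h : m ≤ i) : Gser m i = 0 := by
  ext u
  simp only [Gser, coeff_mk, map_zero]
  rw [numWalks_eq_zero_of_top m _ _ (by omega), Nat.cast_zero]

lemma Gser_rec (m i : ℕ) (hm : 1 ≤ m) (h1 : 1 ≤ i) (h2 : i ≤ m - 1) :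
    Gser m i = Gser m (i-1) + X * Gser m (i+1) := by
  have hcast : ((i : ℤ)) ≤ (m : ℤ) - 1 := by omega
  ext u
  rw [map_add, Gser, Gser, coeff_mk, coeff_mk]
  have hrec := numWalks_succ m (i + 2*u - 1) (i : ℤ) (by positivity) hcast
  rw [show i + 2*u - 1 + 1 = i + 2*u by omega] at hrec
  have e1 : (i : ℤ) - 1 = ((i - 1 : ℕ) : ℤ) := by omega
  have e2 : (i : ℤ) + 1 = ((i + 1 : ℕ) : ℤ) := by omega
  rw [e1, e2] at hrec
  cases u with
  | zero =>
    rw [PowerSeries.coeff_zero_eq_constantCoeff]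
    simp only [map_mul, constantCoeff_X, zero_mul, add_zero]
    rw [hrec, show i - 1 + 2*0 = i + 2*0 - 1 by omega]
    rw [numWalks_eq_zero_of_lt m (i + 2*0 - 1) ((i+1 : ℕ) : ℤ) (by omega)]
    push_cast
    ring
  | succ u' =>
    rw [PowerSeries.coeff_succ_X_mul, Gser, coeff_mk]
    rw [hrec, show i - 1 + 2*(u'+1) = i + 2*(u'+1) - 1 by omega,
      show i + 1 + 2*u' = i + 2*(u'+1) - 1 by omega]
    push_cast
    ring

lemma Gser_rec0 (m : ℕ) (hm : 1 ≤ m) : Gser m 0 = 1 + X * Gser m 1 := by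
  have h1 : (0 : ℤ) ≤ (m : ℤ) - 1 := by omega
  ext u
  rw [map_add, Gser, coeff_mk, Nat.cast_zero]
  cases u with
  | zero =>
    rw [PowerSeries.coeff_zero_eq_constantCoeff]
    simp only [map_mul, map_one, constantCoeff_X, zero_mul, add_zero, Nat.cast_ofNat]
    rw [show 0 + 2*0 = 0 by omega, numWalks_zero m hm]
    norm_num
  | succ u' =>
    rw [PowerSeries.coeff_succ_X_mul, Gser, coeff_mk, Nat.cast_one]
    have hrec := numWalks_succ m (2*u' + 1) (0 : ℤ) le_rfl h1
    rw [show 2*u' + 1 + 1 = 0 + 2*(u'+1) by omega] at hrec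
    rw [hrec, numWalks_eq_zero_of_neg m _ _ (by omega),
      show 2*u' + 1 = 1 + 2*u' by omega]
    have : PowerSeries.coeff (u' + 1) (1 : PowerSeries ℚ) = 0 := by
      rw [PowerSeries.coeff_one]
      simp
    rw [this]
    push_cast
    ring

lemma Gser_cheb (m : ℕ) (hm : 1 ≤ m) :
    ∀ r, r ≤ m - 1 → Gser m (m - 1 - r) = (chebP r : PowerSeries ℚ) * Gser m (m-1)
  | 0, _ => by simp [chebP]
  | 1, h => by
    have hm2 : 2 ≤ m := by omega
    have := Gser_rec m (m-1) hm (by omega) le_rfl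
    rw [show m - 1 + 1 = m by omega, Gser_top m m le_rfl, mul_zero, add_zero] at this
    rw [show m - 1 - 1 = m - 1 - 1 from rfl, ← this]
    simp [chebP]
  | (r+2), h => by
    have h1 := Gser_cheb m hm (r+1) (by omega)
    have h0 := Gser_cheb m hm r (by omega)
    have hi1 : 1 ≤ m - 1 - (r+1) := by omega
    have hrec := Gser_rec m (m - 1 - (r+1)) hm hi1 (by omega)
    rw [show m - 1 - (r+1) - 1 = m - 1 - (r+2) by omega,
      show m - 1 - (r+1) + 1 = m - 1 - r by omega] at hrec
    have : Gser m (m - 1 - (r+2)) = Gser m (m - 1 - (r+1)) - X * Gser m (m - 1 - r) := by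
      rw [hrec]; ring
    rw [this, h1, h0, chebP]
    push_cast
    ring

lemma chebP_coeff_zero : ∀ r : ℕ, (chebP r).coeff 0 = 1
  | 0 => by simp [chebP]
  | 1 => by simp [chebP]
  | (r+2) => by
    rw [chebP, Polynomial.coeff_sub, chebP_coeff_zero (r+1), Polynomial.mul_coeff_zero,
      Polynomial.coeff_X_zero]
    ring

lemma Gser_unit (m : ℕ) (hm : 1 ≤ m) :
    (chebP m : PowerSeries ℚ) * Gser m (m-1) = 1 := by
  rcases Nat.lt_or_ge m 2 with h2 | h2
  · have hm1 : m = 1 := by omega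
    subst hm1
    have h := Gser_rec0 1 le_rfl
    rw [Gser_top 1 1 le_rfl, mul_zero, add_zero] at h
    rw [show (1:ℕ) - 1 = 0 from rfl, h]
    simp [chebP]
  · have h0 := Gser_cheb m hm (m-1) le_rfl
    have h1 := Gser_cheb m hm (m-2) (by omega)
    rw [show m - 1 - (m-1) = 0 by omega] at h0
    rw [show m - 1 - (m-2) = 1 by omega] at h1
    have hr0 := Gser_rec0 m hm
    rw [h0, h1] at hr0
    have hcheb : (chebP m : PowerSeries ℚ)
        = (chebP (m-1) : PowerSeries ℚ) - X * (chebP (m-2) : PowerSeries ℚ) := by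
      rw [show m = (m-2) + 2 by omega, chebP]
      push_cast
      rfl
    rw [hcheb]
    rw [sub_mul, hr0]
    ring

/-! ### Cauchy products and `antidiagonalTuple` -/

lemma sum_antidiagonalTuple_succ {M : Type*} [AddCommMonoid M] (k N : ℕ)
    (F : (Fin (k+1) → ℕ) → M) :
    ∑ v ∈ Finset.Nat.antidiagonalTuple (k+1) N, F v
      = ∑ ab ∈ Finset.HasAntidiagonal.antidiagonal N, ∑ u ∈ Finset.Nat.antidiagonalTuple k ab.2,
          F (Fin.cons ab.1 u) := by
  rw [← Finset.sum_sigma (Finset.HasAntidiagonal.antidiagonal N)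
    (fun ab => Finset.Nat.antidiagonalTuple k ab.2)
    (fun p => F (Fin.cons p.1.1 p.2))]
  refine Finset.sum_nbij' (fun v => ⟨(v 0, ∑ j : Fin k, v j.succ), Fin.tail v⟩)
    (fun p => Fin.cons p.1.1 p.2) ?_ ?_ ?_ ?_ ?_
  · intro v hv
    rw [Finset.Nat.mem_antidiagonalTuple] at hv
    rw [Finset.mem_sigma, Finset.HasAntidiagonal.mem_antidiagonal]
    constructor
    · rw [← hv, Fin.sum_univ_succ]
    · rw [Finset.Nat.mem_antidiagonalTuple]
      rfl
  · intro p hp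
    rw [Finset.mem_sigma, Finset.HasAntidiagonal.mem_antidiagonal] at hp
    obtain ⟨h1, h2⟩ := hp
    rw [Finset.Nat.mem_antidiagonalTuple] at h2 ⊢
    rw [Fin.sum_univ_succ]
    simp only [Fin.cons_zero, Fin.cons_succ]
    rw [h2, h1]
  · intro v hv
    exact Fin.cons_self_tail v
  · intro p hp
    rw [Finset.mem_sigma, Finset.HasAntidiagonal.mem_antidiagonal] at hp
    refine Sigma.ext ?_ ?_
    · simp only [Fin.cons_zero]
      have : ∑ j : Fin k, (Fin.cons p.1.1 p.2 : Fin (k+1) → ℕ) j.succ = p.1.2 := by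
        simp only [Fin.cons_succ]
        exact (Finset.Nat.mem_antidiagonalTuple.mp hp.2)
      rw [this]
    · simp only [Fin.cons_zero, Fin.tail_cons]
      exact heq_of_eq rfl
  · intro v hv
    dsimp only
    rw [Fin.cons_self_tail]

lemma coeff_prod_fin : ∀ (k : ℕ) (f : Fin k → PowerSeries ℚ) (N : ℕ),
    PowerSeries.coeff N (∏ i, f i)
      = ∑ u ∈ Finset.Nat.antidiagonalTuple k N, ∏ i, PowerSeries.coeff (u i) (f i)
  | 0, f, N => by
    cases N with
    | zero => simp
    | succ n => simp [PowerSeries.coeff_one]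
  | (k+1), f, N => by
    rw [Fin.prod_univ_succ, PowerSeries.coeff_mul, sum_antidiagonalTuple_succ]
    refine Finset.sum_congr rfl fun ab _ => ?_
    rw [coeff_prod_fin k (fun i => f i.succ) ab.2, Finset.mul_sum]
    refine Finset.sum_congr rfl fun u _ => ?_
    rw [Fin.prod_univ_succ]
    simp only [Fin.cons_zero, Fin.cons_succ]

/-- fix `m ≥ 1`, `q ≥ 0`, `0 ≤ ρ < m`, and `N ≥ 0`.  The
coefficient of `x^N` in `p_{m-ρ-1}(x)·p_m(x)^{-(q+1)} ∈ ℚ[[x]]` equals the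
number of `(q+1)`-tuples `(P₀,…,P_q)` of Dyck paths such that for some
`u₀+⋯+u_q = N`, `P₀` is counted by `D_m(0, m-ρ-1; u₀)` and each `P_ν`
(`1 ≤ ν ≤ q`) is counted by `D_m(0,0; u_ν)`; that is, it equals
`Σ_{u₀+⋯+u_q = N} D_m(0,m-ρ-1;u₀)·∏_{ν=1}^q D_m(0,0;u_ν)`. -/
theorem statement6 (m q ρ N : ℕ) (hm : 1 ≤ m) (hρ : ρ < m) :
    PowerSeries.coeff N
      ((chebP (m - ρ - 1) : PowerSeries ℚ) *
        ((chebP m : PowerSeries ℚ))⁻¹ ^ (q + 1))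
    = ∑ u ∈ Finset.Nat.antidiagonalTuple (q + 1) N,
        (dyckCount m 0 (m - ρ - 1) (u 0) : ℚ) *
          ∏ ν : Fin q, (dyckCount m 0 0 (u ν.succ) : ℚ) := by
  have hc0 : PowerSeries.constantCoeff (chebP m : PowerSeries ℚ) ≠ 0 := by
    rw [Polynomial.constantCoeff_coe, chebP_coeff_zero]
    exact one_ne_zero
  have hinv : ((chebP m : PowerSeries ℚ))⁻¹ = Gser m (m-1) :=
    (PowerSeries.inv_eq_iff_mul_eq_one hc0).mpr
      (by rw [mul_comm]; exact Gser_unit m hm)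
  have hGρ : Gser m ρ = (chebP (m - ρ - 1) : PowerSeries ℚ) * Gser m (m-1) := by
    have := Gser_cheb m hm (m - 1 - ρ) (by omega)
    rw [show m - 1 - (m - 1 - ρ) = ρ by omega] at this
    rw [show m - ρ - 1 = m - 1 - ρ by omega]
    exact this
  have hLHS : (chebP (m - ρ - 1) : PowerSeries ℚ) *
      ((chebP m : PowerSeries ℚ))⁻¹ ^ (q + 1)
      = ∏ i : Fin (q+1), (Fin.cons (Gser m ρ) (fun _ : Fin q => Gser m (m-1)) i) := by
    rw [hinv, Fin.prod_univ_succ, Fin.cons_zero, hGρ]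
    simp only [Fin.cons_succ]
    rw [Finset.prod_const, Finset.card_univ, Fintype.card_fin, pow_succ]
    ring
  rw [hLHS, coeff_prod_fin]
  refine Finset.sum_congr rfl fun u _ => ?_
  rw [Fin.prod_univ_succ, Fin.cons_zero]
  congr 1
  · rw [Gser, coeff_mk, dyckCount_eq_numWalks m (m - ρ - 1) (u 0) hm,
      show m - 1 - (m - ρ - 1) = ρ by omega]
  · refine Finset.prod_congr rfl fun ν _ => ?_
    rw [Fin.cons_succ, Gser, coeff_mk, dyckCount_eq_numWalks m 0 (u ν.succ) hm,
      show m - 1 - 0 = m - 1 by omega]
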